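/- Combining the previous two facts: if the symmetric normalized propagation Â^K X converges to a limit matrix X∞ whose rows are all positive multiples of a common nonzero vector v ∈ ℝ^d, and no column of X∞ is constant, then Corr(X∞) = 1 and SMV(X∞) = 0, i.e., infinite propagation simultaneously produces extreme overcorrelation and extreme oversmoothing. -/

import Mathlib

noncomputable def mean {N : ℕ} (x : Fin N → ℝ) : ℝ := (∑ i, x i) / N

noncomputable def center {N : ℕ} (x : Fin N → ℝ) : Fin N → ℝ := fun i => x i - mean x

noncomputable def pearson {N : ℕ} (x y : Fin N → ℝ) : ℝ :=
  (∑ i, center x i * center y i) /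
    (Real.sqrt (∑ i, center x i ^ 2) * Real.sqrt (∑ i, center y i ^ 2))

noncomputable def Corr {N d : ℕ} (X : Matrix (Fin N) (Fin d) ℝ) : ℝ :=
  (1 / (d * ((d : ℝ) - 1))) *
    ∑ p ∈ Finset.univ.offDiag, |pearson (fun i => X i p.1) (fun i => X i p.2)|

noncomputable def rowNorm {N d : ℕ} (X : Matrix (Fin N) (Fin d) ℝ) (i : Fin N) : ℝ :=
  Real.sqrt (∑ k, X i k ^ 2)

noncomputable def rowDist {N d : ℕ} (X : Matrix (Fin N) (Fin d) ℝ) (i j : Fin N) : ℝ :=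
  (1 / 2) * Real.sqrt (∑ k, (X i k / rowNorm X i - X j k / rowNorm X j) ^ 2)

noncomputable def SMV {N d : ℕ} (X : Matrix (Fin N) (Fin d) ℝ) : ℝ :=
  (1 / (N * ((N : ℝ) - 1))) * ∑ p ∈ Finset.univ.offDiag, rowDist X p.1 p.2

theorem stmt12 {N d : ℕ} (hd : 2 ≤ d) (X : Matrix (Fin N) (Fin d) ℝ)
    (a : Fin N → ℝ) (v : Fin d → ℝ) (ha : ∀ i, 0 < a i) (hv : v ≠ 0)
    (hX : ∀ i k, X i k = a i * v k)
    (hnc : ∀ j : Fin d, center (fun i => X i j) ≠ 0) :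
    Corr X = 1 ∧ SMV X = 0 := by
  set c : Fin N → ℝ := center a with hc
  have hcol : ∀ j, center (fun i => X i j) = fun i => v j * c i := by
    intro j
    funext i
    simp only [hc, center, mean, hX, ← Finset.sum_mul]
    ring
  have hvj : ∀ j, v j ≠ 0 := by
    intro j hj
    apply hnc j
    rw [hcol j]; funext i; simp [hj]
  have hcne : c ≠ 0 := by
    intro h0
    apply hnc ⟨0, by omega⟩
    rw [hcol ⟨0, by omega⟩, h0]
    funext i; simp
  have hS : 0 < ∑ i, c i ^ 2 := by
    obtain ⟨i, hi⟩ := Function.ne_iff.mp hcne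
    simp only [Pi.zero_apply] at hi
    exact Finset.sum_pos' (fun _ _ => sq_nonneg _) ⟨i, Finset.mem_univ i, by positivity⟩
  set S := ∑ i, c i ^ 2 with hSdef
  have hsq : ∀ j : Fin d, ∑ i, (v j * c i) ^ 2 = v j ^ 2 * S := by
    intro j
    rw [hSdef, Finset.mul_sum]
    exact Finset.sum_congr rfl (fun i _ => by ring)
  have hp : ∀ p : Fin d × Fin d, |pearson (fun i => X i p.1) (fun i => X i p.2)| = 1 := by
    intro ⟨j, k⟩
    unfold pearson
    rw [hcol j, hcol k]
    have h1 : ∑ i, (v j * c i) * (v k * c i) = v j * v k * S := by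
      rw [hSdef, Finset.mul_sum]
      exact Finset.sum_congr rfl (fun i _ => by ring)
    rw [h1, hsq j, hsq k,
      Real.sqrt_mul (sq_nonneg _), Real.sqrt_mul (sq_nonneg _),
      Real.sqrt_sq_eq_abs, Real.sqrt_sq_eq_abs]
    have hss : Real.sqrt S * Real.sqrt S = S := Real.mul_self_sqrt hS.le
    have hSne : S ≠ 0 := hS.ne'
    rw [show |v j| * Real.sqrt S * (|v k| * Real.sqrt S)
        = |v j| * |v k| * S by rw [show |v j| * Real.sqrt S * (|v k| * Real.sqrt S)
          = |v j| * |v k| * (Real.sqrt S * Real.sqrt S) by ring, hss]]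
    have h3 : (0:ℝ) < |v j| * |v k| * S := by
      have hj' := abs_pos.mpr (hvj j)
      have hk' := abs_pos.mpr (hvj k)
      positivity
    rw [abs_div, abs_mul, abs_mul, abs_of_pos hS, abs_of_pos h3]
    exact div_self h3.ne'
  have hcorr : Corr X = 1 := by
    unfold Corr
    rw [Finset.sum_congr rfl (fun p _ => hp p), Finset.sum_const, Finset.offDiag_card]
    simp only [Finset.card_univ, Fintype.card_fin, nsmul_eq_mul, mul_one]
    have h2 : ((d * d - d : ℕ) : ℝ) = (d : ℝ) * ((d : ℝ) - 1) := by
      have : d ≤ d * d := Nat.le_mul_of_pos_left d (by omega)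
      push_cast [Nat.cast_sub this]
      ring
    rw [h2]
    have hdne : (d : ℝ) * ((d : ℝ) - 1) ≠ 0 := by
      have : (2 : ℝ) ≤ d := by exact_mod_cast hd
      nlinarith
    field_simp
    exact div_self (by intro h; apply hdne; rw [h, mul_zero])
  refine ⟨hcorr, ?_⟩
  have hnv : 0 < Real.sqrt (∑ k, v k ^ 2) := by
    obtain ⟨k, hk⟩ := Function.ne_iff.mp hv
    simp only [Pi.zero_apply] at hk
    apply Real.sqrt_pos.mpr
    exact Finset.sum_pos' (fun _ _ => sq_nonneg _) ⟨k, Finset.mem_univ k, by positivity⟩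
  set nv := Real.sqrt (∑ k, v k ^ 2) with hnvdef
  have hrn : ∀ i, rowNorm X i = a i * nv := by
    intro i
    unfold rowNorm
    have : ∑ k, X i k ^ 2 = a i ^ 2 * ∑ k, v k ^ 2 := by
      rw [Finset.mul_sum]
      exact Finset.sum_congr rfl (fun k _ => by rw [hX]; ring)
    rw [this, Real.sqrt_mul (sq_nonneg _), Real.sqrt_sq_eq_abs, abs_of_pos (ha i), hnvdef]
  have hrd : ∀ i j : Fin N, rowDist X i j = 0 := by
    intro i j
    unfold rowDist
    have hz : ∀ k : Fin d, X i k / rowNorm X i - X j k / rowNorm X j = 0 := by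
      intro k
      rw [hrn i, hrn j, hX i k, hX j k,
        mul_div_mul_left _ _ (ha i).ne', mul_div_mul_left _ _ (ha j).ne', sub_self]
    rw [Finset.sum_congr rfl (fun (k:Fin d) _ => by rw [hz k] : ∀ k ∈ Finset.univ, (X i k / rowNorm X i - X j k / rowNorm X j)^2 = 0^2)]
    simp
  unfold SMV
  rw [Finset.sum_congr rfl (fun p _ => hrd p.1 p.2), Finset.sum_const]
  simp
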